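/- An extended transitive 2-player symmetric game has a symmetric pure strategy ε-Nash equilibrium for every ε > 0; i.e., there exists x ∈ S such that u(y, x) ≤ u(x, x) + ε for all y ∈ S. Moreover such a point is reached as the endpoint of a maximal (u, ε)-self-play sequence. -/
import Mathlib


/-- An extended transitive 2-player symmetric game has a symmetric pure
strategy ε-Nash equilibrium for every ε > 0, reached as the endpoint of a
finite (u,ε)-self-play sequence (encoded by its generating sequence (z_n)). -/
theorem stmt_8 {S : Type*} [Nonempty S] (u : S → S → ℝ)
    (hET : ∃ Φ : S → ℝ, (∃ M : ℝ, ∀ x, |Φ x| ≤ M) ∧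
      ∀ ε : ℝ, 0 < ε → ∃ δ : ℝ, 0 < δ ∧
        ∀ x y : S, u y x - u x x > ε → Φ y - Φ x > δ) :
    ∀ ε : ℝ, 0 < ε →
      ∃ (N : ℕ) (z : ℕ → S),
        (∀ n < N, u (z (n + 1)) (z n) > u (z n) (z n) + ε) ∧
        ∀ y : S, u y (z N) ≤ u (z N) (z N) + ε := by
  obtain ⟨Φ, ⟨M, hM⟩, hT⟩ := hET
  intro ε hε
  obtain ⟨δ, hδ, hImp⟩ := hT ε hε
  -- It suffices to find an ε-equilibrium point
  suffices h : ∃ x : S, ∀ y : S, u y x ≤ u x x + ε by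
    obtain ⟨x, hx⟩ := h
    exact ⟨0, fun _ => x, fun n hn => absurd hn (Nat.not_lt_zero n), hx⟩
  by_contra h
  push_neg at h
  have key : ∀ x : S, ∃ y, u y x - u x x > ε := by
    intro x
    obtain ⟨y, hy⟩ := h x
    exact ⟨y, by linarith⟩
  choose f hf using key
  set x0 := Classical.arbitrary S with hx0
  have hΦ : ∀ n : ℕ, Φ x0 + n * δ ≤ Φ (f^[n] x0) := by
    intro n
    induction n with
    | zero => simp
    | succ n ih =>
      have h1 := hImp (f^[n] x0) (f (f^[n] x0)) (hf _)
      rw [Function.iterate_succ_apply']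
      push_cast
      nlinarith
  obtain ⟨n, hn⟩ := exists_nat_gt ((2 * M) / δ)
  have h1 := hΦ n
  have h2 := abs_le.mp (hM (f^[n] x0))
  have h3 := abs_le.mp (hM x0)
  have : (2 * M) < n * δ := by
    rwa [div_lt_iff₀ hδ] at hn
  linarith [h1, h2.2, h3.1]
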